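/- For the discrete interval hypergraph H_n on vertex set {1,...,n} whose hyperedges are all discrete intervals [s,t] with 1 ≤ s ≤ t ≤ n, the conflict-free chromatic number equals ⌊log₂ n⌋ + 1. -/

import Mathlib

private lemma cf_mid (u v : ℕ) (hu : 0 < u) (huv : u < v)
    (h : padicValNat 2 u = padicValNat 2 v) :
    ∃ w, u < w ∧ w < v ∧ padicValNat 2 v < padicValNat 2 w := by
  haveI : Fact (Nat.Prime 2) := ⟨Nat.prime_two⟩
  set a := padicValNat 2 u with ha
  have hv : 0 < v := hu.trans huv
  have h2u : 2 ^ a ∣ u := pow_padicValNat_dvd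
  have h2v : 2 ^ a ∣ v := h ▸ pow_padicValNat_dvd
  have hnu : ¬ 2 ^ (a + 1) ∣ u := pow_succ_padicValNat_not_dvd hu.ne'
  have hnv : ¬ 2 ^ (a + 1) ∣ v := h ▸ pow_succ_padicValNat_not_dvd hv.ne'
  obtain ⟨b, hb⟩ := h2u
  obtain ⟨c, hc⟩ := h2v
  have hpa : 0 < 2 ^ a := Nat.pow_pos (by norm_num)
  have hbc : b < c := by
    by_contra hle
    push_neg at hle
    have := Nat.mul_le_mul_left (2 ^ a) hle
    omega
  have hbodd : ¬ 2 ∣ b := by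
    intro ⟨d, hd⟩
    exact hnu ⟨d, by rw [hb, hd]; ring⟩
  have hcodd : ¬ 2 ∣ c := by
    intro ⟨d, hd⟩
    exact hnv ⟨d, by rw [hc, hd]; ring⟩
  have hb1 : 2 ∣ b + 1 := by omega
  have hb1c : b + 1 < c := by omega
  refine ⟨2 ^ a * (b + 1), ?_, ?_, ?_⟩
  · rw [hb]; exact (Nat.mul_lt_mul_left hpa).mpr (by omega)
  · rw [hc]; exact (Nat.mul_lt_mul_left hpa).mpr hb1c
  · have hw0 : 2 ^ a * (b + 1) ≠ 0 := by positivity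
    have : 2 ^ (a + 1) ∣ 2 ^ a * (b + 1) := by
      obtain ⟨d, hd⟩ := hb1
      exact ⟨d, by rw [hd]; ring⟩
    have := (padicValNat_dvd_iff_le hw0).mp this
    omega

private lemma cf_lower (n : ℕ) : ∀ a (C : ℕ → ℕ) (S : Finset ℕ), 1 ≤ n →
    (∀ i ∈ Finset.Icc a (a + n - 1), C i ∈ S) →
    (∀ s t : ℕ, a ≤ s → s ≤ t → t ≤ a + n - 1 →
      ∃ v ∈ Finset.Icc s t, ∀ u ∈ Finset.Icc s t, u ≠ v → C u ≠ C v) →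
    Nat.log 2 n + 1 ≤ S.card := by
  induction n using Nat.strong_induction_on with
  | _ n ih =>
  intro a C S hn hmem hcf
  obtain ⟨v, hv, huniq⟩ := hcf a (a + n - 1) le_rfl (by omega) le_rfl
  simp only [Finset.mem_Icc] at hv
  have hCv : C v ∈ S := hmem v (Finset.mem_Icc.mpr hv)
  have hS1 : 1 ≤ S.card := Finset.card_pos.mpr ⟨C v, hCv⟩
  rcases Nat.lt_or_ge n 2 with h2 | h2
  · have : n = 1 := by omega
    subst this
    simpa using hS1
  · -- two sides: left length v - a, right length a + n - 1 - v
    set L := v - a with hL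
    set R := a + n - 1 - v with hR
    have hLR : L + R = n - 1 := by omega
    have hmax : n / 2 ≤ max L R := by omega
    -- pick the bigger side as interval [a', a' + m - 1]
    obtain ⟨a', m, hm, hmn, hsub, hnotv⟩ :
        ∃ a' m, n / 2 ≤ m ∧ m < n ∧
          (∀ i, a' ≤ i → i ≤ a' + m - 1 → a ≤ i ∧ i ≤ a + n - 1) ∧
          (∀ i, a' ≤ i → i ≤ a' + m - 1 → i ≠ v) := by
      rcases le_total R L with hle | hle
      · exact ⟨a, L, by omega, by omega, fun i h1 h2 => by omega, fun i h1 h2 => by omega⟩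
      · exact ⟨v + 1, R, by omega, by omega, fun i h1 h2 => by omega, fun i h1 h2 => by omega⟩
    have hm1 : 1 ≤ m := le_trans (by omega) hm
    have key := ih m hmn a' C (S.erase (C v)) hm1 ?_ ?_
    · have hcard : (S.erase (C v)).card = S.card - 1 := Finset.card_erase_of_mem hCv
      have hlog : Nat.log 2 n ≤ Nat.log 2 m + 1 := by
        have h1 : Nat.log 2 (n / 2) = Nat.log 2 n - 1 := Nat.log_div_base 2 n
        have h2' : 0 < Nat.log 2 n := Nat.log_pos (by norm_num) h2
        have h3 : Nat.log 2 (n / 2) ≤ Nat.log 2 m := Nat.log_mono_right hm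
        omega
      omega
    · intro i hi
      simp only [Finset.mem_Icc] at hi
      have := hsub i hi.1 hi.2
      refine Finset.mem_erase.mpr ⟨?_, hmem i (Finset.mem_Icc.mpr this)⟩
      exact huniq i (Finset.mem_Icc.mpr this) (hnotv i hi.1 hi.2)
    · intro s t hs hst ht
      have h1 := hsub s hs (by omega)
      have h2' := hsub t (by omega) ht
      exact hcf s t h1.1 hst h2'.2

/-- The conflict-free chromatic number of the discrete interval hypergraph `H_n`
(vertices `{1,…,n}`, hyperedges all intervals `[s,t]`) equals `⌊log₂ n⌋ + 1`. -/
theorem cf_chromatic_discrete_interval (n : ℕ) (hn : 1 ≤ n) :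
    IsLeast {k : ℕ | ∃ C : ℕ → ℕ,
        (∀ i ∈ Finset.Icc 1 n, C i ∈ Finset.Icc 1 k) ∧
        ∀ s t : ℕ, 1 ≤ s → s ≤ t → t ≤ n →
          ∃ v ∈ Finset.Icc s t, ∀ u ∈ Finset.Icc s t, u ≠ v → C u ≠ C v}
      (Nat.log 2 n + 1) := by
  constructor
  · -- membership: the coloring C i = padicValNat 2 i + 1
    refine ⟨fun i => padicValNat 2 i + 1, ?_, ?_⟩
    · intro i hi
      simp only [Finset.mem_Icc] at hi ⊢
      refine ⟨by omega, ?_⟩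
      have h1 : 2 ^ padicValNat 2 i ∣ i := pow_padicValNat_dvd
      have h2 : 2 ^ padicValNat 2 i ≤ n :=
        le_trans (Nat.le_of_dvd (by omega) h1) hi.2
      have := Nat.le_log_of_pow_le (by norm_num) h2
      omega
    · intro s t hs hst ht
      obtain ⟨v, hvmem, hvmax⟩ := Finset.exists_max_image (Finset.Icc s t)
        (fun i => padicValNat 2 i) ⟨s, Finset.mem_Icc.mpr ⟨le_rfl, hst⟩⟩
      refine ⟨v, hvmem, ?_⟩
      intro u hu hune heq
      simp only [Finset.mem_Icc] at hu hvmem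
      have heq' : padicValNat 2 u = padicValNat 2 v := by simpa using heq
      rcases Nat.lt_or_ge u v with hlt | hge
      · obtain ⟨w, hw1, hw2, hw3⟩ := cf_mid u v (by omega) hlt heq'
        have := hvmax w (Finset.mem_Icc.mpr ⟨by omega, by omega⟩)
        omega
      · have hlt : v < u := lt_of_le_of_ne hge hune.symm
        obtain ⟨w, hw1, hw2, hw3⟩ := cf_mid v u (by omega) hlt heq'.symm
        have := hvmax w (Finset.mem_Icc.mpr ⟨by omega, by omega⟩)
        omega
  · -- lower bound
    intro k hk
    obtain ⟨C, hmem, hcf⟩ := hk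
    have := cf_lower n 1 C (Finset.Icc 1 k) hn ?_ ?_
    · simpa using this
    · intro i hi
      exact hmem i (by simpa [Nat.add_sub_cancel] using hi)
    · intro s t hs hst ht
      exact hcf s t hs hst (by omega)
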